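/- Let S ⊆ ℝ be a set of Lebesgue measure zero, a ∈ ℝ, and let g : [0,1] → ℝ be continuous with g(s) − s·a ∈ S for every s ∈ [0,1]. Then g(1) = g(0) + a. -/

import Mathlib

open MeasureTheory

theorem stmt_1 (S : Set ℝ) (hS : volume S = 0) (a : ℝ) (g : ℝ → ℝ)
    (hg : ContinuousOn g (Set.Icc 0 1))
    (hmem : ∀ s ∈ Set.Icc (0:ℝ) 1, g s - s * a ∈ S) :
    g 1 = g 0 + a := by
  set h : ℝ → ℝ := fun s => g s - s * a with hh
  have hcont : ContinuousOn h (Set.Icc 0 1) :=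
    hg.sub ((continuousOn_id.mul continuousOn_const))
  have hsub : Set.uIcc (h 0) (h 1) ⊆ S := by
    have h1 : Set.uIcc (0:ℝ) 1 = Set.Icc 0 1 := Set.uIcc_of_le zero_le_one
    have := intermediate_value_uIcc (f := h) (a := 0) (b := 1) (by rw [h1]; exact hcont)
    intro x hx
    obtain ⟨s, hs, rfl⟩ := this hx
    exact hmem s (h1 ▸ hs)
  have hvol : volume (Set.uIcc (h 0) (h 1)) = 0 :=
    le_antisymm (hS ▸ measure_mono hsub) zero_le
  rw [Set.uIcc, Real.volume_Icc, ENNReal.ofReal_eq_zero] at hvol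
  have hmm : max (h 0) (h 1) - min (h 0) (h 1) = |h 1 - h 0| := max_sub_min_eq_abs _ _
  have : h 1 = h 0 := by
    have h0 : |h 1 - h 0| = 0 := le_antisymm (by linarith) (abs_nonneg _)
    have := abs_eq_zero.mp h0
    linarith
  simp only [hh] at this
  linarith [this]
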